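/- arXiv:2509.18747 — 5 statements merged into one kernel-verified Lean document; each statement's English description precedes it below -/
import Mathlib

section
/- For all x ≠ 0, the derivative of Φ at x lies in the open interval (0, 1). -/
noncomputable def Phi (x : ℝ) : ℝ := if x = 0 then 0 else Real.log ((Real.exp x - 1) / x)

theorem deriv_Phi_mem_Ioo (x : ℝ) (hx : x ≠ 0) :
    deriv Phi x ∈ Set.Ioo (0 : ℝ) 1 := by
  have hEpos : 0 < Real.exp x := Real.exp_pos x
  set E := Real.exp x with hE
  -- sign facts
  have hquot : 0 < (E - 1) / x := by
    rcases lt_or_gt_of_ne hx with h | h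
    · have : E < 1 := by rw [hE]; simpa using Real.exp_lt_one_iff.2 h
      exact div_pos_of_neg_of_neg (by linarith) h
    · have : 1 < E := by
        have := Real.add_one_lt_exp hx; rw [hE]; linarith
      exact div_pos (by linarith) h
  have hEne : E - 1 ≠ 0 := by
    intro h0
    rw [h0] at hquot
    simp at hquot
  have hD : 0 < x * (E - 1) := by
    rcases lt_or_gt_of_ne hx with h | h
    · have : E < 1 := by rw [hE]; simpa using Real.exp_lt_one_iff.2 h
      exact mul_pos_of_neg_of_neg h (by linarith)
    · have : 1 < E := by
        have := Real.add_one_lt_exp hx; rw [hE]; linarith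
      exact mul_pos h (by linarith)
  have h1 : x + 1 < E := by rw [hE]; exact Real.add_one_lt_exp hx
  have h2 : (1 - x) * E < 1 := by
    have := Real.add_one_lt_exp (neg_ne_zero.2 hx)
    have hmul : (-x + 1) * E < Real.exp (-x) * E :=
      mul_lt_mul_of_pos_right this hEpos
    rw [hE] at hmul ⊢
    rw [← Real.exp_add] at hmul
    simp at hmul
    linarith
  have hnum : 0 < x * E - (E - 1) := by nlinarith
  -- compute derivative
  have hderiv : HasDerivAt Phi ((x * E - (E - 1)) / (x * (E - 1))) x := by
    have hh : HasDerivAt (fun y => (Real.exp y - 1) / y)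
        ((E * x - (E - 1) * 1) / x ^ 2) x := by
      exact ((Real.hasDerivAt_exp x).sub_const 1).div (hasDerivAt_id x) hx
    have hlog : HasDerivAt (fun y => Real.log ((Real.exp y - 1) / y))
        ((E * x - (E - 1) * 1) / x ^ 2 / ((E - 1) / x)) x :=
      hh.log (ne_of_gt hquot)
    have heq : (E * x - (E - 1) * 1) / x ^ 2 / ((E - 1) / x)
        = (x * E - (E - 1)) / (x * (E - 1)) := by
      field_simp
    rw [heq] at hlog
    refine hlog.congr_of_eventuallyEq ?_
    filter_upwards [eventually_ne_nhds hx] with y hy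
    simp [Phi, hy]
  rw [hderiv.deriv]
  constructor
  · exact div_pos hnum hD
  · rw [div_lt_one hD]
    nlinarith
end

section
/- The function Φ, defined by Φ(x) = ln((e^x − 1)/x) for x ≠ 0 and Φ(0) = 0, is 1-Lipschitz on ℝ: |Φ(x) − Φ(y)| ≤ |x − y| for all real x, y. -/
open Real intervalIntegral

lemma frac_pos {x : ℝ} (hx : x ≠ 0) : 0 < (Real.exp x - 1) / x := by
  rcases lt_or_gt_of_ne hx with h | h
  · apply div_pos_of_neg_of_neg
    · linarith [Real.exp_lt_one_iff.mpr h]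
    · exact h
  · apply div_pos
    · linarith [Real.one_lt_exp_iff.mpr h]
    · exact h

noncomputable def gg (x : ℝ) : ℝ := ∫ t in (0:ℝ)..1, Real.exp (t * x)

lemma gg_eq {x : ℝ} (hx : x ≠ 0) : gg x = (Real.exp x - 1) / x := by
  unfold gg
  rw [intervalIntegral.integral_comp_mul_right (fun u => Real.exp u) hx]
  rw [integral_exp]; simp [div_eq_inv_mul]

lemma gg_zero : gg 0 = 1 := by simp [gg]

lemma gg_mono : Monotone gg := by
  intro x y hxy
  apply intervalIntegral.integral_mono_on zero_le_one
  · exact (Real.continuous_exp.comp (continuous_id.mul continuous_const)).intervalIntegrable 0 1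
  · exact (Real.continuous_exp.comp (continuous_id.mul continuous_const)).intervalIntegrable 0 1
  · intro t ht
    exact Real.exp_le_exp.mpr (mul_le_mul_of_nonneg_left hxy ht.1)

lemma gg_pos (x : ℝ) : 0 < gg x := by
  rcases eq_or_ne x 0 with h | h
  · simp [h, gg_zero]
  · rw [gg_eq h]; exact frac_pos h

lemma Phi_eq (x : ℝ) : Phi x = Real.log (gg x) := by
  rcases eq_or_ne x 0 with h | h
  · simp [h, Phi, gg_zero]
  · simp [Phi, h, gg_eq h]

lemma Phi_mono : Monotone Phi := by
  intro x y hxy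
  rw [Phi_eq, Phi_eq]
  exact Real.log_le_log (gg_pos x) (gg_mono hxy)

lemma Phi_neg (x : ℝ) : Phi (-x) = Phi x - x := by
  rcases eq_or_ne x 0 with h | h
  · simp [h, Phi]
  · have hx : (-x) ≠ 0 := neg_ne_zero.mpr h
    have key : (Real.exp (-x) - 1) / (-x) = Real.exp (-x) * ((Real.exp x - 1) / x) := by
      field_simp
      rw [Real.exp_neg]
      field_simp [Real.exp_ne_zero x]
      ring
    rw [show Phi (-x) = Real.log ((Real.exp (-x) - 1) / (-x)) from if_neg hx,
      show Phi x = Real.log ((Real.exp x - 1) / x) from if_neg h,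
      key, Real.log_mul (Real.exp_ne_zero _) (ne_of_gt (frac_pos h)), Real.log_exp]
    ring

theorem Phi_lipschitz : ∀ x y : ℝ, |Phi x - Phi y| ≤ |x - y| := by
  have key : ∀ x y : ℝ, x ≤ y → |Phi x - Phi y| ≤ |x - y| := by
    intro x y hxy
    have h1 : Phi x ≤ Phi y := Phi_mono hxy
    have h2 : Phi y - y ≤ Phi x - x := by
      rw [← Phi_neg, ← Phi_neg]
      exact Phi_mono (neg_le_neg hxy)
    rw [abs_sub_comm, abs_of_nonneg (by linarith), abs_sub_comm, abs_of_nonneg (by linarith)]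
    linarith
  intro x y
  rcases le_total x y with h | h
  · exact key x y h
  · rw [abs_sub_comm, abs_sub_comm x y]; exact key y x h
end

section
/- For all x ≠ 0, the second derivative of Φ at x equals (e^{2x} − (2 + x²)·e^x + 1) / (x²·(e^x − 1)²), and this quantity is strictly positive; in particular Φ is strictly convex on each of (−∞, 0) and (0, ∞). -/
lemma exp_sub_one_ne (x : ℝ) (hx : x ≠ 0) : Real.exp x - 1 ≠ 0 := by
  intro h
  exact hx ((Real.exp_eq_exp (y := 0)).mp (by rw [Real.exp_zero]; linarith))

lemma hasDerivAt_Phi {x : ℝ} (hx : x ≠ 0) :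
    HasDerivAt Phi (Real.exp x / (Real.exp x - 1) - 1 / x) x := by
  have hne := exp_sub_one_ne x hx
  have hg : HasDerivAt (fun y => (Real.exp y - 1) / y)
      ((Real.exp x * x - (Real.exp x - 1) * 1) / x ^ 2) x :=
    ((Real.hasDerivAt_exp x).sub_const 1).div (hasDerivAt_id x) hx
  have hgx : (Real.exp x - 1) / x ≠ 0 := div_ne_zero hne hx
  have h := hg.log hgx
  have heq : Phi =ᶠ[nhds x] fun y => Real.log ((Real.exp y - 1) / y) := by
    filter_upwards [isOpen_ne.mem_nhds hx] with y hy
    simp [Phi, hy]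
  have h2 := h.congr_of_eventuallyEq heq
  refine h2.congr_deriv ?_
  field_simp

lemma key_pos_of_pos {x : ℝ} (hx : 0 < x) :
    x ^ 2 * Real.exp x < (Real.exp x - 1) ^ 2 := by
  set u := Real.exp (x / 2) with hu
  have hupos : 0 < u := Real.exp_pos _
  have hs : x / 2 < Real.sinh (x / 2) := Real.self_lt_sinh_iff.mpr (by linarith)
  have hsinh : Real.sinh (x / 2) = (u - u⁻¹) / 2 := by
    rw [Real.sinh_eq, hu, ← Real.exp_neg]
  have hx2 : x < u - u⁻¹ := by rw [hsinh] at hs; linarith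
  have hxu : x * u < u ^ 2 - 1 := by
    have := mul_lt_mul_of_pos_right hx2 hupos
    have huu : u⁻¹ * u = 1 := inv_mul_cancel₀ (ne_of_gt hupos)
    nlinarith
  have hexp : Real.exp x = u ^ 2 := by
    rw [hu, sq, ← Real.exp_add]; norm_num
  have hxupos : 0 < x * u := mul_pos hx hupos
  nlinarith [mul_pos (sub_pos.mpr hxu) (by nlinarith : (0:ℝ) < u ^ 2 - 1 + x * u)]

lemma key_pos {x : ℝ} (hx : x ≠ 0) :
    x ^ 2 * Real.exp x < (Real.exp x - 1) ^ 2 := by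
  rcases lt_or_gt_of_ne hx with h | h
  · have hk := key_pos_of_pos (x := -x) (by linarith)
    have he : Real.exp (-x) = (Real.exp x)⁻¹ := Real.exp_neg x
    have hpos : 0 < Real.exp x := Real.exp_pos x
    rw [he] at hk
    have h2 := mul_lt_mul_of_pos_right hk (by positivity : (0:ℝ) < Real.exp x ^ 2)
    have hinv : (Real.exp x)⁻¹ * Real.exp x = 1 := inv_mul_cancel₀ (ne_of_gt hpos)
    nlinarith
  · exact key_pos_of_pos h

lemma deriv2_Phi {x : ℝ} (hx : x ≠ 0) :
    deriv (deriv Phi) x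
      = (Real.exp (2 * x) - (2 + x ^ 2) * Real.exp x + 1)
        / (x ^ 2 * (Real.exp x - 1) ^ 2) := by
  have hne := exp_sub_one_ne x hx
  have hev : deriv Phi =ᶠ[nhds x] fun y => Real.exp y / (Real.exp y - 1) - 1 / y := by
    filter_upwards [isOpen_ne.mem_nhds hx] with y hy
    exact (hasDerivAt_Phi hy).deriv
  rw [hev.deriv_eq]
  have hA : HasDerivAt (fun y => Real.exp y / (Real.exp y - 1))
      ((Real.exp x * (Real.exp x - 1) - Real.exp x * Real.exp x) / (Real.exp x - 1) ^ 2) x :=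
    (Real.hasDerivAt_exp x).div ((Real.hasDerivAt_exp x).sub_const 1) hne
  have hB : HasDerivAt (fun y : ℝ => 1 / y) (-(x ^ 2)⁻¹) x := by
    simpa [one_div] using hasDerivAt_inv hx
  have h := (hA.sub hB).deriv
  rw [show (fun y : ℝ => Real.exp y / (Real.exp y - 1) - 1 / y) = (fun y => Real.exp y / (Real.exp y - 1)) - (fun y : ℝ => 1 / y) from rfl, h]
  have h2 : Real.exp (2 * x) = Real.exp x * Real.exp x := by
    rw [two_mul, Real.exp_add]
  rw [h2]
  field_simp
  ring

theorem Phi_second_deriv_and_convex :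
    (∀ x : ℝ, x ≠ 0 →
      deriv (deriv Phi) x
        = (Real.exp (2 * x) - (2 + x ^ 2) * Real.exp x + 1)
          / (x ^ 2 * (Real.exp x - 1) ^ 2) ∧
      0 < (Real.exp (2 * x) - (2 + x ^ 2) * Real.exp x + 1)
          / (x ^ 2 * (Real.exp x - 1) ^ 2)) ∧
    StrictConvexOn ℝ (Set.Iio (0 : ℝ)) Phi ∧
    StrictConvexOn ℝ (Set.Ioi (0 : ℝ)) Phi := by
  have hpos : ∀ x : ℝ, x ≠ 0 →
      0 < (Real.exp (2 * x) - (2 + x ^ 2) * Real.exp x + 1)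
        / (x ^ 2 * (Real.exp x - 1) ^ 2) := by
    intro x hx
    have hne := exp_sub_one_ne x hx
    have hnum : Real.exp (2 * x) - (2 + x ^ 2) * Real.exp x + 1
        = (Real.exp x - 1) ^ 2 - x ^ 2 * Real.exp x := by
      rw [two_mul, Real.exp_add]; ring
    rw [hnum]
    have := key_pos hx
    have hden : 0 < x ^ 2 * (Real.exp x - 1) ^ 2 := by positivity
    exact div_pos (by linarith) hden
  have hd2 : ∀ x : ℝ, x ≠ 0 → 0 < deriv (deriv Phi) x := by
    intro x hx
    rw [deriv2_Phi hx]
    exact hpos x hx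
  refine ⟨fun x hx => ⟨deriv2_Phi hx, hpos x hx⟩, ?_, ?_⟩
  · apply strictConvexOn_of_deriv2_pos (convex_Iio 0)
    · exact fun x hx => (hasDerivAt_Phi (ne_of_lt hx)).continuousAt.continuousWithinAt
    · intro x hx
      rw [interior_Iio] at hx
      have : deriv^[2] Phi x = deriv (deriv Phi) x := by
        simp [Function.iterate_succ, Function.iterate_one]
      rw [this]
      exact hd2 x (ne_of_lt hx)
  · apply strictConvexOn_of_deriv2_pos (convex_Ioi 0)
    · exact fun x hx => (hasDerivAt_Phi (ne_of_gt hx)).continuousAt.continuousWithinAt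
    · intro x hx
      rw [interior_Ioi] at hx
      have : deriv^[2] Phi x = deriv (deriv Phi) x := by
        simp [Function.iterate_succ, Function.iterate_one]
      rw [this]
      exact hd2 x (ne_of_gt hx)
end

section
/- For every real x, every c > 0, and every ε ∈ (0,1): 0 ≤ max(x,0) − c·Φ(x/c) ≤ ε − c·ln(1 − e^{−ε/c}) + c·max(ln|x|, 0) − c·ln(c), where the term c·max(ln|x|,0) is interpreted as 0 when x = 0. -/
lemma one_sub_exp_neg_pos {s : ℝ} (hs : 0 < s) : 0 < 1 - Real.exp (-s) := by
  have := Real.exp_lt_one_iff.mpr (neg_lt_zero.mpr hs)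
  linarith

lemma one_sub_exp_neg_le (s : ℝ) : 1 - Real.exp (-s) ≤ s := by
  have := Real.add_one_le_exp (-s)
  linarith

lemma key_id {y : ℝ} (hy : y ≠ 0) :
    max y 0 - Phi y = Real.log |y| - Real.log (1 - Real.exp (-|y|)) := by
  rcases hy.lt_or_gt with h | h
  · have h1 : max y 0 = 0 := max_eq_right h.le
    have ha : |y| = -y := abs_of_neg h
    have hnum : 0 < 1 - Real.exp (-(-y)) := by
      rw [neg_neg]
      have := Real.exp_lt_one_iff.mpr h
      linarith
    have heq : (Real.exp y - 1) / y = (1 - Real.exp (-(-y))) / (-y) := by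
      rw [neg_neg, div_neg, ← neg_div, neg_sub]
    simp only [Phi, if_neg hy, h1, ha, heq]
    rw [Real.log_div hnum.ne' (neg_pos.mpr h).ne']
    ring
  · have h1 : max y 0 = y := max_eq_left h.le
    have ha : |y| = y := abs_of_pos h
    have hnum : 0 < 1 - Real.exp (-y) := one_sub_exp_neg_pos h
    have heq : (Real.exp y - 1) / y = Real.exp y * (1 - Real.exp (-y)) / y := by
      rw [mul_sub, ← Real.exp_add]
      simp
    simp only [Phi, if_neg hy, h1, ha, heq]
    rw [Real.log_div (by positivity) h.ne', Real.log_mul (Real.exp_pos y).ne' hnum.ne',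
      Real.log_exp]
    ring

lemma G_nonneg {s : ℝ} (hs : 0 < s) :
    0 ≤ Real.log s - Real.log (1 - Real.exp (-s)) := by
  have := Real.log_le_log (one_sub_exp_neg_pos hs) (one_sub_exp_neg_le s)
  linarith

lemma G_le_self {s : ℝ} (hs : 0 < s) :
    Real.log s - Real.log (1 - Real.exp (-s)) ≤ s := by
  have h1 : s ≤ Real.exp s * (1 - Real.exp (-s)) := by
    have := Real.add_one_le_exp s
    have h2 : Real.exp s * (1 - Real.exp (-s)) = Real.exp s - 1 := by
      rw [mul_sub, ← Real.exp_add]; simp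
    linarith
  have h3 : Real.log s ≤ Real.log (Real.exp s * (1 - Real.exp (-s))) :=
    Real.log_le_log hs h1
  rw [Real.log_mul (Real.exp_pos s).ne' (one_sub_exp_neg_pos hs).ne', Real.log_exp] at h3
  linarith

theorem posPart_sub_mul_Phi_bounds (x c ε : ℝ) (hc : 0 < c) (hε : ε ∈ Set.Ioo (0 : ℝ) 1) :
    0 ≤ max x 0 - c * Phi (x / c) ∧
    max x 0 - c * Phi (x / c)
      ≤ ε - c * Real.log (1 - Real.exp (-ε / c)) + c * max (Real.log |x|) 0
        - c * Real.log c := by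
  obtain ⟨hε0, hε1⟩ := hε
  have htpos : 0 < ε / c := div_pos hε0 hc
  have hneg : -ε / c = -(ε / c) := by ring
  rw [hneg]
  have h1t : 0 < 1 - Real.exp (-(ε / c)) := one_sub_exp_neg_pos htpos
  have hlogt : Real.log (1 - Real.exp (-(ε / c))) ≤ Real.log ε - Real.log c := by
    have h := Real.log_le_log h1t (one_sub_exp_neg_le (ε / c))
    rwa [Real.log_div hε0.ne' hc.ne'] at h
  have hlogε : Real.log ε < 0 := Real.log_neg hε0 hε1
  have hclogt : c * Real.log (1 - Real.exp (-(ε / c))) ≤ c * (Real.log ε - Real.log c) :=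
    mul_le_mul_of_nonneg_left hlogt hc.le
  have hclogε : c * Real.log ε ≤ 0 := mul_nonpos_of_nonneg_of_nonpos hc.le hlogε.le
  by_cases hx : x = 0
  · subst hx
    have hPhi0 : Phi (0 / c) = 0 := by simp [Phi]
    rw [hPhi0]
    simp only [mul_zero, sub_zero, max_self, abs_zero, Real.log_zero]
    constructor
    · linarith
    · nlinarith [mul_sub c (Real.log ε) (Real.log c)]
  · have hy : x / c ≠ 0 := div_ne_zero hx hc.ne'
    have hs : 0 < |x / c| := abs_pos.mpr hy
    have hid := key_id hy
    have hmaxx : max x 0 = c * max (x / c) 0 := by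
      rcases le_or_gt x 0 with h | h
      · rw [max_eq_right h, max_eq_right (div_nonpos_of_nonpos_of_nonneg h hc.le), mul_zero]
      · rw [max_eq_left h.le, max_eq_left (div_nonneg h.le hc.le), mul_div_cancel₀ _ hc.ne']
    have hL : max x 0 - c * Phi (x / c)
        = c * (Real.log |x / c| - Real.log (1 - Real.exp (-|x / c|))) := by
      rw [hmaxx, ← mul_sub, hid]
    set s : ℝ := |x / c| with hsdef
    have hxabs : |x| = c * s := by
      rw [hsdef, abs_div, abs_of_pos hc]
      field_simp
    have hlogx : Real.log |x| = Real.log c + Real.log s := by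
      rw [hxabs, Real.log_mul hc.ne' hs.ne']
    constructor
    · rw [hL]
      exact mul_nonneg hc.le (G_nonneg hs)
    · rw [hL]
      have hmax0 : 0 ≤ max (Real.log |x|) 0 := le_max_right _ _
      have hmax1 : Real.log |x| ≤ max (Real.log |x|) 0 := le_max_left _ _
      rcases le_or_gt s (ε / c) with hst | hst
      · -- small s : use G ≤ s ≤ ε/c
        have hGs : Real.log s - Real.log (1 - Real.exp (-s)) ≤ s := G_le_self hs
        have : c * (Real.log s - Real.log (1 - Real.exp (-s))) ≤ ε := by
          have h2 : c * (Real.log s - Real.log (1 - Real.exp (-s))) ≤ c * (ε / c) :=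
            mul_le_mul_of_nonneg_left (hGs.trans hst) hc.le
          rwa [mul_div_cancel₀ _ hc.ne'] at h2
        nlinarith [mul_le_mul_of_nonneg_left hmax0 hc.le,
          mul_sub c (Real.log ε) (Real.log c)]
      · -- large s : use monotonicity in the log term
        have hmono : Real.log (1 - Real.exp (-(ε / c))) ≤ Real.log (1 - Real.exp (-s)) := by
          apply Real.log_le_log h1t
          have := Real.exp_le_exp.mpr (neg_le_neg hst.le)
          linarith
        have h3 : Real.log s ≤ max (Real.log |x|) 0 - Real.log c := by
          linarith
        have h4 : c * Real.log s ≤ c * (max (Real.log |x|) 0 - Real.log c) :=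
          mul_le_mul_of_nonneg_left h3 hc.le
        have h5 : c * Real.log (1 - Real.exp (-(ε / c)))
            ≤ c * Real.log (1 - Real.exp (-s)) :=
          mul_le_mul_of_nonneg_left hmono hc.le
        nlinarith
end

section
/- For every fixed a ∈ ℝ, the function x ↦ x·Φ(a/x) is monotone nonincreasing on (0, ∞), where Φ(y) = ln((e^y − 1)/y) for y ≠ 0 and Φ(0) = 0. -/
open Real MeasureTheory

lemma ratio_pos {s : ℝ} (hs : s ≠ 0) : 0 < (Real.exp s - 1) / s := by
  rcases lt_or_gt_of_ne hs with h | h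
  · have := Real.exp_lt_one_iff.2 h; apply div_pos_of_neg_of_neg <;> linarith
  · apply div_pos <;> nlinarith [Real.add_one_le_exp s, Real.exp_pos s]

lemma integral_exp_mul {c : ℝ} (hc : c ≠ 0) :
    ∫ x in (0:ℝ)..1, Real.exp (c * x) = (Real.exp c - 1) / c := by
  rw [intervalIntegral.integral_comp_mul_left (fun x => Real.exp x) hc]
  simp [integral_exp, div_eq_inv_mul]

lemma key_ineq {c t : ℝ} (hc : c ≠ 0) (ht0 : 0 < t) (ht1 : t ≤ 1) :
    (Real.exp (t * c) - 1) / (t * c) ≤ ((Real.exp c - 1) / c) ^ t := by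
  set μ : Measure ℝ := volume.restrict (Set.Ioc (0:ℝ) 1) with hμ
  haveI : IsProbabilityMeasure μ := ⟨by simp [hμ]⟩
  have hcont : Continuous fun x : ℝ => Real.exp (c * x) :=
    Real.continuous_exp.comp (continuous_const.mul continuous_id)
  have hgcont : Continuous fun x : ℝ => x ^ t := by
    rw [continuous_iff_continuousAt]
    exact fun x => Real.continuousAt_rpow_const x t (Or.inr ht0.le)
  have hJ : (∫ x, (Real.exp (c * x)) ^ t ∂μ) ≤ (∫ x, Real.exp (c * x) ∂μ) ^ t := by
    refine (Real.concaveOn_rpow ht0.le ht1).le_map_integral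
      (hgcont.continuousOn) isClosed_Ici
      (Filter.Eventually.of_forall fun x => (Real.exp_pos _).le)
      (hcont.integrableOn_Ioc) ?_
    exact (hgcont.comp hcont).integrableOn_Ioc
  have h1 : (∫ x, Real.exp (c * x) ∂μ) = (Real.exp c - 1) / c := by
    rw [hμ, ← intervalIntegral.integral_of_le zero_le_one, integral_exp_mul hc]
  have h2 : (∫ x, (Real.exp (c * x)) ^ t ∂μ) = (Real.exp (t * c) - 1) / (t * c) := by
    have : ∀ x : ℝ, (Real.exp (c * x)) ^ t = Real.exp ((t * c) * x) := by
      intro x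
      rw [← Real.exp_mul]; ring_nf
    simp_rw [this]
    rw [hμ, ← intervalIntegral.integral_of_le zero_le_one,
      integral_exp_mul (mul_ne_zero (ne_of_gt ht0) hc)]
  rw [h1, h2] at hJ
  exact hJ

lemma Phi_mul_le {c t : ℝ} (hc : c ≠ 0) (ht0 : 0 < t) (ht1 : t ≤ 1) :
    Phi (t * c) ≤ t * Phi c := by
  have htc : t * c ≠ 0 := mul_ne_zero (ne_of_gt ht0) hc
  rw [Phi, Phi, if_neg htc, if_neg hc, ← Real.log_rpow (ratio_pos hc)]
  exact Real.log_le_log (ratio_pos htc) (key_ineq hc ht0 ht1)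

theorem antitoneOn_mul_Phi (a : ℝ) :
    AntitoneOn (fun x : ℝ => x * Phi (a / x)) (Set.Ioi (0 : ℝ)) := by
  intro x hx y hy hxy
  simp only [Set.mem_Ioi] at hx hy
  rcases eq_or_ne a 0 with rfl | ha
  · simp [Phi]
  have hc : a / x ≠ 0 := div_ne_zero ha (ne_of_gt hx)
  have ht0 : 0 < x / y := div_pos hx hy
  have ht1 : x / y ≤ 1 := (div_le_one hy).2 hxy
  have hay : a / y = (x / y) * (a / x) := by field_simp
  have := mul_le_mul_of_nonneg_left (Phi_mul_le hc ht0 ht1) hy.le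
  calc y * Phi (a / y) = y * Phi ((x / y) * (a / x)) := by rw [hay]
    _ ≤ y * ((x / y) * Phi (a / x)) := this
    _ = x * Phi (a / x) := by field_simp
end
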